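/- The pair (∂, −λ_{y²}∘∂_y) is not contained in the k-subalgebra of the product algebra End_k(k[x]) × End_k(k[y]) generated by the four elements e, f, κ, κ'. (Since this pair lies in the ring Γ_q(ℙ¹) of global q-differential operators, the homomorphism η : U_q(sl_2) → Γ_q(ℙ¹) is not surjective.) -/

import Mathlib

open Polynomial

noncomputable section

namespace QDiff1

variable (k : Type*) [Field k]

/-- Left multiplication operator `λ_r`. -/
def lmul (r : k[X]) : Module.End k k[X] := LinearMap.mulLeft k r

variable {k}

/-- The automorphism `σ_a`, acting on `x^b` by `q^(a*b)`. -/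
def sigma (q : k) (a : ℤ) : Module.End k k[X] :=
  (aeval (C (q ^ a) * X) : k[X] →ₐ[k] k[X]).toLinearMap

/-- The operator `∂^{β^a}`, sending `x^b` to `(1 + q^a + ⋯ + q^{a(b-1)}) x^(b-1)`. -/
def dq (q : k) (a : ℤ) : Module.End k k[X] :=
  (Polynomial.basisMonomials k).constr k
    fun b => (∑ i ∈ Finset.range b, q ^ (a * (i : ℤ))) • X ^ (b - 1)

/-- `φ` is homogeneous of degree `a : ℤ`. -/
def IsHomog (a : ℤ) (φ : Module.End k k[X]) : Prop :=
  ∀ b : ℕ, ∃ c : k, φ (X ^ b) = c • (if 0 ≤ a + (b : ℤ) then X ^ (a + (b : ℤ)).toNat else 0)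

/-- `M` is closed under `φ ↦ λ_r ∘ φ ∘ λ_s`. -/
def Closed (M : Submodule k (Module.End k k[X])) : Prop :=
  ∀ r s : k[X], ∀ φ ∈ M, lmul k r * φ * lmul k s ∈ M

/-- The filtration `D_q^n` of `q`-differential operators on `k[x]`. -/
def Dq (q : k) : ℕ → Submodule k (Module.End k k[X])
  | 0 => sInf {M | Closed M ∧
      {φ : Module.End k k[X] | ∃ a : ℤ, IsHomog a φ ∧ ∀ b : ℕ,
        φ * lmul k (X ^ b) = q ^ (a * (b : ℤ)) • (lmul k (X ^ b) * φ)} ⊆ ↑M}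
  | n + 1 => sInf {M | Closed M ∧ Dq q n ≤ M ∧
      {φ : Module.End k k[X] | ∃ a : ℤ, IsHomog a φ ∧ ∀ b : ℕ,
        φ * lmul k (X ^ b) - q ^ (a * (b : ℤ)) • (lmul k (X ^ b) * φ) ∈ Dq q n} ⊆ ↑M}


/-- Images of the generators E, F, K, K⁻¹ of U_q(sl₂) under η, as pairs of
operators on k[x] and k[y] (both polynomial rings are modelled by k[X];
in the second factor, sigma q (-1) plays the role of σ_y and dq q (-2)
the role of ∂_y^{β²}). -/
def eElt (q : k) : Module.End k k[X] × Module.End k k[X] :=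
  (-(q ^ 2 • (lmul k (X ^ 2) * dq q 2)), q • dq q (-2))

def fElt (q : k) : Module.End k k[X] × Module.End k k[X] :=
  (q⁻¹ • (sigma q (-2) * dq q 2), -((q ^ 2)⁻¹ • (sigma q 2 * lmul k (X ^ 2) * dq q (-2))))

def kElt (q : k) : Module.End k k[X] × Module.End k k[X] :=
  (sigma q 2, sigma q (-2))

def kElt' (q : k) : Module.End k k[X] × Module.End k k[X] :=
  (sigma q (-2), sigma q 2)

section Aux

variable {k : Type*} [Field k]

open LaurentPolynomial Finset

/-- Evaluation of a Laurent polynomial at a unit. -/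
def lev (u : kˣ) : LaurentPolynomial k →ₐ[k] k :=
  AddMonoidAlgebra.lift k k ℤ ((Units.coeHom k).comp (zpowersHom kˣ u))

lemma lev_T (u : kˣ) (n : ℤ) : lev u (T n) = ↑(u ^ n) := by
  rw [lev, LaurentPolynomial.T, AddMonoidAlgebra.lift_single]
  simp

lemma lev_C (u : kˣ) (a : k) : lev u (LaurentPolynomial.C a) = a := by
  rw [LaurentPolynomial.C_eq_algebraMap]
  exact (lev u).commutes a

lemma lev_single (u : kˣ) (n : ℤ) (a : k) :
    lev u (AddMonoidAlgebra.single n a) = a * ↑(u ^ n) := by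
  rw [LaurentPolynomial.single_eq_C_mul_T, map_mul, lev_T, lev_C]

/-- The substitution `T ↦ C (u^d) * T` on Laurent polynomials. -/
def lshiftHom (u : kˣ) (d : ℤ) : Multiplicative ℤ →* LaurentPolynomial k where
  toFun n := LaurentPolynomial.C ((u ^ (d * n.toAdd) : kˣ) : k) * T n.toAdd
  map_one' := by simp
  map_mul' a b := by
    simp only [toAdd_mul, mul_add, zpow_add, Units.val_mul, map_mul, T_add]
    ring_nf

def lshift (u : kˣ) (d : ℤ) : LaurentPolynomial k →ₐ[k] LaurentPolynomial k :=
  AddMonoidAlgebra.lift k (LaurentPolynomial k) ℤ (lshiftHom u d)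

lemma lshift_single (u : kˣ) (d n : ℤ) (a : k) :
    lshift u d (AddMonoidAlgebra.single n a) = AddMonoidAlgebra.single n (a * ↑(u ^ (d * n))) := by
  rw [lshift, AddMonoidAlgebra.lift_single]
  show a • ((lshiftHom u d) (Multiplicative.ofAdd n)) = _
  rw [lshiftHom]
  simp only [MonoidHom.coe_mk, OneHom.coe_mk, toAdd_ofAdd]
  rw [← LaurentPolynomial.single_eq_C_mul_T, AddMonoidAlgebra.smul_single', mul_comm]

lemma lev_lshift (u : kˣ) (d : ℤ) (b : ℕ) (h : 0 ≤ (b : ℤ) + d) (F : LaurentPolynomial k) :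
    lev (u ^ b) (lshift u d F) = lev (u ^ ((b : ℤ) + d).toNat) F := by
  induction F using AddMonoidAlgebra.induction_linear with
  | zero => simp only [map_zero]
  | add f g hf hg => simp only [map_add, hf, hg]
  | single n a =>
    rw [lshift_single, lev_single, lev_single]
    have h1 : (u ^ b) ^ n = u ^ ((b : ℤ) * n) := by
      rw [← zpow_natCast u b, ← zpow_mul]
    have h2 : (u ^ ((b : ℤ) + d).toNat) ^ n = u ^ (((b : ℤ) + d) * n) := by
      rw [← zpow_natCast u, Int.toNat_of_nonneg h, ← zpow_mul]
    rw [h1, h2, mul_assoc, ← Units.val_mul, ← zpow_add]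
    congr 2
    ring

lemma lev_toLaurent (u : kˣ) (p : k[X]) :
    lev u (Polynomial.toLaurent p) = p.eval ↑u := by
  induction p using Polynomial.induction_on' with
  | add p q hp hq => simp only [map_add, hp, hq, eval_add]
  | monomial n a =>
    rw [Polynomial.toLaurent_C_mul_T, map_mul, lev_T, lev_C, eval_monomial,
      zpow_natCast, Units.val_pow_eq_pow_val]

/-- `X^m` for `m : ℤ`, with value `0` for negative `m`. -/
def XZ (m : ℤ) : k[X] := if 0 ≤ m then X ^ m.toNat else 0

lemma XZ_natCast (m : ℕ) : (XZ (m : ℤ) : k[X]) = X ^ m := by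
  simp [XZ]

lemma XZ_neg {m : ℤ} (h : m < 0) : (XZ m : k[X]) = 0 := by
  simp [XZ, not_le.2 h]


lemma dq_apply (q : k) (a : ℤ) (b : ℕ) :
    dq q a (X ^ b) = (∑ i ∈ Finset.range b, q ^ (a * (i : ℤ))) • X ^ (b - 1) := by
  have hb : (X : k[X]) ^ b = Polynomial.basisMonomials k b := by
    rw [Polynomial.coe_basisMonomials, X_pow_eq_monomial]
  rw [dq, hb, Module.Basis.constr_basis]

/-- `φ` is representable by Laurent-polynomial symbols with shifts in `[-N, N]`. -/
def Rep (u : kˣ) (φ : Module.End k k[X]) : Prop :=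
  ∃ N : ℕ, ∃ F : ℤ → LaurentPolynomial k,
    (∀ d : ℤ, d ∉ Finset.Icc (-(N : ℤ)) (N : ℤ) → F d = 0) ∧
    (∀ (b : ℕ) (d : ℤ), (b : ℤ) + d < 0 → lev (u ^ b) (F d) = 0) ∧
    ∀ b : ℕ, φ (X ^ b) =
      ∑ d ∈ Finset.Icc (-(N : ℤ)) (N : ℤ), lev (u ^ b) (F d) • XZ ((b : ℤ) + d)

lemma rep_single (u : kˣ) (N : ℕ) (d₀ : ℤ) (hd : d₀ ∈ Finset.Icc (-(N : ℤ)) (N : ℤ))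
    (P : LaurentPolynomial k)
    (hvan : ∀ b : ℕ, (b : ℤ) + d₀ < 0 → lev (u ^ b) P = 0)
    {φ : Module.End k k[X]} (hφ : ∀ b : ℕ, φ (X ^ b) = lev (u ^ b) P • XZ ((b : ℤ) + d₀)) :
    Rep u φ := by
  refine ⟨N, fun d => if d = d₀ then P else 0, ?_, ?_, ?_⟩
  · intro d hdn
    by_cases h : d = d₀
    · exact absurd (h ▸ hd) hdn
    · simp [h]
  · intro b d hbd
    by_cases h : d = d₀
    · subst h; simpa using hvan b hbd
    · simp [h]
  · intro b
    rw [hφ]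
    have : ∀ d ∈ Finset.Icc (-(N : ℤ)) (N : ℤ),
        lev (u ^ b) (if d = d₀ then P else 0) • (XZ ((b : ℤ) + d) : k[X]) =
        if d = d₀ then lev (u ^ b) P • XZ ((b : ℤ) + d₀) else 0 := by
      intro d _
      by_cases h : d = d₀
      · subst h; simp
      · simp [h]
    rw [Finset.sum_congr rfl this, Finset.sum_ite_eq' _ d₀, if_pos hd]

lemma rep_lmulX2 (u : kˣ) : Rep u (lmul k (X ^ 2)) := by
  refine rep_single u 2 2 (by simp) 1 (fun b h => absurd h (by omega)) (fun b => ?_)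
  rw [lmul, LinearMap.mulLeft_apply, map_one, one_smul]
  have : (b : ℤ) + 2 = ((b + 2 : ℕ) : ℤ) := by push_cast; ring
  rw [this, XZ_natCast, ← pow_add, add_comm]

lemma val_pow_zpow (u : kˣ) (b : ℕ) (a : ℤ) :
    (((u ^ b) ^ a : kˣ) : k) = ((u : k) ^ a) ^ b := by
  have : (u ^ b) ^ a = (u ^ a) ^ b := by
    rw [← zpow_natCast u b, ← zpow_mul, mul_comm, zpow_mul, zpow_natCast]
  rw [this, Units.val_pow_eq_pow_val, Units.val_zpow_eq_zpow_val]

lemma rep_sigma (u : kˣ) (a : ℤ) : Rep u (sigma (u : k) a) := by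
  refine rep_single u 0 0 (by simp) (T a) (fun b h => absurd h (by omega)) (fun b => ?_)
  have h1 : sigma (u : k) a (X ^ b) = Polynomial.C (((u : k) ^ a) ^ b) * X ^ b := by
    rw [sigma, AlgHom.toLinearMap_apply, map_pow, aeval_X, mul_pow, Polynomial.C_pow]
  rw [h1, add_zero, XZ_natCast, lev_T, val_pow_zpow, Polynomial.smul_eq_C_mul]

lemma rep_dq (u : kˣ) (a : ℤ) (ha : (u : k) ^ a ≠ 1) : Rep u (dq (u : k) a) := by
  have hgeom : ∀ b : ℕ, (∑ i ∈ Finset.range b, (u : k) ^ (a * (i : ℤ))) =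
      (((u : k) ^ a - 1)⁻¹) * ((((u ^ b) ^ a : kˣ) : k) - 1) := by
    intro b
    have hx : ∀ i : ℕ, (u : k) ^ (a * (i : ℤ)) = ((u : k) ^ a) ^ i := by
      intro i; rw [zpow_mul, zpow_natCast]
    rw [Finset.sum_congr rfl fun i _ => hx i, geom_sum_eq ha, div_eq_mul_inv, mul_comm,
      val_pow_zpow]
  have hlev : ∀ b : ℕ, lev (u ^ b) (LaurentPolynomial.C (((u : k) ^ a - 1)⁻¹) * (T a - 1)) =
      (((u : k) ^ a - 1)⁻¹) * ((((u ^ b) ^ a : kˣ) : k) - 1) := by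
    intro b
    rw [map_mul, map_sub, lev_C, lev_T, map_one]
  refine rep_single u 1 (-1) (by simp) (LaurentPolynomial.C (((u : k) ^ a - 1)⁻¹) * (T a - 1))
    (fun b h => ?_) (fun b => ?_)
  · have hb : b = 0 := by omega
    subst hb
    rw [hlev]
    simp
  · rw [dq_apply, hlev, ← hgeom]
    rcases b with _ | m
    · simp
    · have : ((m + 1 : ℕ) : ℤ) + (-1) = ((m : ℕ) : ℤ) := by push_cast; ring
      rw [this, XZ_natCast]
      norm_num

lemma icc_subset {N M : ℕ} (h : N ≤ M) :
    Finset.Icc (-(N : ℤ)) (N : ℤ) ⊆ Finset.Icc (-(M : ℤ)) (M : ℤ) :=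
  Finset.Icc_subset_Icc (by omega) (by omega)

lemma rep_algebraMap (u : kˣ) (r : k) :
    Rep u (algebraMap k (Module.End k k[X]) r) := by
  refine rep_single u 0 0 (by simp) (LaurentPolynomial.C r)
    (fun b h => absurd h (by omega)) (fun b => ?_)
  rw [Module.algebraMap_end_apply, lev_C, add_zero, XZ_natCast]

lemma rep_add (u : kˣ) {φ ψ : Module.End k k[X]} (hφ : Rep u φ) (hψ : Rep u ψ) :
    Rep u (φ + ψ) := by
  obtain ⟨N₁, F, hF0, hFv, hFe⟩ := hφ
  obtain ⟨N₂, G, hG0, hGv, hGe⟩ := hψ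
  refine ⟨max N₁ N₂, F + G, ?_, ?_, ?_⟩
  · intro d hd
    have h1 : F d = 0 := hF0 d fun h => hd (icc_subset (le_max_left _ _) h)
    have h2 : G d = 0 := hG0 d fun h => hd (icc_subset (le_max_right _ _) h)
    simp [h1, h2]
  · intro b d h
    simp [hFv b d h, hGv b d h]
  · intro b
    rw [LinearMap.add_apply, hFe b, hGe b,
      Finset.sum_subset (icc_subset (le_max_left N₁ N₂))
        (fun d _ hd => by rw [hF0 d hd, map_zero, zero_smul]),
      Finset.sum_subset (icc_subset (le_max_right N₁ N₂))
        (fun d _ hd => by rw [hG0 d hd, map_zero, zero_smul]),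
      ← Finset.sum_add_distrib]
    refine Finset.sum_congr rfl fun d _ => ?_
    rw [Pi.add_apply, map_add, add_smul]

lemma rep_mul (u : kˣ) {φ ψ : Module.End k k[X]} (hφ : Rep u φ) (hψ : Rep u ψ) :
    Rep u (φ * ψ) := by
  obtain ⟨N₁, F, hF0, hFv, hFe⟩ := hφ
  obtain ⟨N₂, G, hG0, hGv, hGe⟩ := hψ
  refine ⟨N₁ + N₂,
    fun m => ∑ d ∈ Finset.Icc (-(N₂ : ℤ)) (N₂ : ℤ), lshift u d (F (m - d)) * G d, ?_, ?_, ?_⟩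
  · intro m hm
    refine Finset.sum_eq_zero fun d hd => ?_
    have : F (m - d) = 0 := by
      refine hF0 _ fun hmem => hm ?_
      simp only [Finset.mem_Icc] at *
      push_cast at *
      omega
    rw [this, map_zero, zero_mul]
  · intro b m hbm
    rw [map_sum]
    refine Finset.sum_eq_zero fun d hd => ?_
    rw [map_mul]
    rcases le_or_gt 0 ((b : ℤ) + d) with h | h
    · rw [lev_lshift u d b h, hFv ((b : ℤ) + d).toNat (m - d)
        (by rw [Int.toNat_of_nonneg h]; omega), zero_mul]
    · rw [hGv b d h, mul_zero]
  · intro b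
    have step : (φ * ψ) (X ^ b) =
        ∑ d ∈ Finset.Icc (-(N₂ : ℤ)) (N₂ : ℤ), ∑ e ∈ Finset.Icc (-(N₁ : ℤ)) (N₁ : ℤ),
          lev (u ^ b) (lshift u d (F e) * G d) • XZ ((b : ℤ) + (d + e)) := by
      rw [Module.End.mul_apply, hGe b, map_sum]
      refine Finset.sum_congr rfl fun d _ => ?_
      rw [map_smul]
      rcases le_or_gt 0 ((b : ℤ) + d) with h | h
      · have hXZ : (XZ ((b : ℤ) + d) : k[X]) = X ^ ((b : ℤ) + d).toNat := by
          simp [XZ, h]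
        rw [hXZ, hFe (((b : ℤ) + d).toNat), Finset.smul_sum]
        refine Finset.sum_congr rfl fun e _ => ?_
        rw [smul_smul, map_mul, lev_lshift u d b h]
        have harg : ((((b : ℤ) + d).toNat : ℤ)) + e = (b : ℤ) + (d + e) := by
          rw [Int.toNat_of_nonneg h]; ring
        rw [harg, mul_comm]
      · rw [XZ_neg h, map_zero, smul_zero]
        refine (Finset.sum_eq_zero fun e _ => ?_).symm
        rw [map_mul, hGv b d h, mul_zero, zero_smul]
    rw [step]
    have target : ∀ m ∈ Finset.Icc (-(N₁ + N₂ : ℕ) : ℤ) ((N₁ + N₂ : ℕ) : ℤ),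
        lev (u ^ b) (∑ d ∈ Finset.Icc (-(N₂ : ℤ)) (N₂ : ℤ), lshift u d (F (m - d)) * G d) •
          (XZ ((b : ℤ) + m) : k[X]) =
        ∑ d ∈ Finset.Icc (-(N₂ : ℤ)) (N₂ : ℤ),
          lev (u ^ b) (lshift u d (F (m - d)) * G d) • XZ ((b : ℤ) + m) := by
      intro m _
      rw [map_sum, Finset.sum_smul]
    rw [Finset.sum_congr rfl target]
    conv_rhs => rw [Finset.sum_comm]
    refine Finset.sum_congr rfl fun d hd => ?_
    -- reindex the inner sum
    have hdmem : -(N₂ : ℤ) ≤ d ∧ d ≤ (N₂ : ℤ) := Finset.mem_Icc.mp hd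
    have hmap : (Finset.Icc (-(N₁ + N₂ : ℕ) - d : ℤ) ((N₁ + N₂ : ℕ) - d)).map
        (addLeftEmbedding d) = Finset.Icc (-(N₁ + N₂ : ℕ) : ℤ) ((N₁ + N₂ : ℕ) : ℤ) := by
      rw [Finset.map_add_left_Icc]
      congr 1 <;> ring
    conv_rhs => rw [← hmap, Finset.sum_map]
    have hsub : Finset.Icc (-(N₁ : ℤ)) (N₁ : ℤ) ⊆
        Finset.Icc (-(N₁ + N₂ : ℕ) - d : ℤ) ((N₁ + N₂ : ℕ) - d) :=
      Finset.Icc_subset_Icc (by push_cast; omega) (by push_cast; omega)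
    rw [Finset.sum_subset hsub (fun e _ he => by
      rw [hF0 e he, map_zero, zero_mul, map_zero, zero_smul])]
    refine Finset.sum_congr rfl fun e _ => ?_
    simp only [addLeftEmbedding_apply, add_sub_cancel_left]

/-- The subalgebra of operators representable by Laurent symbols. -/
def Psub (u : kˣ) : Subalgebra k (Module.End k k[X]) where
  carrier := {φ | Rep u φ}
  mul_mem' := rep_mul u
  add_mem' := rep_add u
  one_mem' := by simpa using rep_algebraMap u 1
  zero_mem' := by simpa using rep_algebraMap u 0
  algebraMap_mem' := rep_algebraMap u

lemma mem_Psub (u : kˣ) (φ : Module.End k k[X]) : φ ∈ Psub u ↔ Rep u φ := Iff.rfl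

lemma coeff_comp_C_mul_X (p : k[X]) (c : k) (i : ℕ) :
    (p.comp (Polynomial.C c * X)).coeff i = c ^ i * p.coeff i := by
  induction p using Polynomial.induction_on' with
  | add p q hp hq => simp [add_comp, hp, hq, mul_add]
  | monomial m a =>
    rw [← C_mul_X_pow_eq_monomial, mul_comp, C_comp, pow_comp, X_comp, mul_pow, ← mul_assoc,
      ← Polynomial.C_pow, ← map_mul]
    simp only [coeff_C_mul, coeff_X_pow]
    by_cases h : i = m
    · subst h; rw [if_pos rfl]; ring
    · rw [if_neg h, mul_zero, mul_zero, mul_zero]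

lemma trans_pow_ne_one [CharZero k] {q : k} (htr : Transcendental ℚ q) {m : ℕ} (hm : 0 < m) :
    q ^ m ≠ 1 := by
  intro h1
  apply htr
  refine ⟨X ^ m - 1, ?_, ?_⟩
  · intro h0
    have hc : ((X : ℚ[X]) ^ m - 1).coeff 0 = -1 := by
      have hne : ¬(0 = m) := by omega
      simp [Polynomial.coeff_X_pow, hne]
    rw [h0] at hc
    simp at hc
  · simp [h1]

lemma trans_pow_inj [CharZero k] {q : k} (hq0 : q ≠ 0) (htr : Transcendental ℚ q) :
    Function.Injective fun b : ℕ => q ^ b := by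
  have key : ∀ {x y : ℕ}, x < y → q ^ x = q ^ y → False := by
    intro x y hxy hpq
    have h1 : q ^ x * q ^ (y - x) = q ^ x * 1 := by
      rw [mul_one, ← pow_add, show x + (y - x) = y by omega]
      exact hpq.symm
    exact trans_pow_ne_one htr (by omega : 0 < y - x)
      (mul_left_cancel₀ (pow_ne_zero x hq0) h1)
  intro a c h
  rcases lt_trichotomy a c with hlt | heq | hlt
  · exact (key hlt h).elim
  · exact heq
  · exact (key hlt h.symm).elim

lemma not_rep_dq0 [CharZero k] (u : kˣ) (htr : Transcendental ℚ (u : k)) :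
    ¬ Rep u (dq (u : k) 0) := by
  rintro ⟨N, F, hF0, hFv, hFe⟩
  have hdq : ∀ b : ℕ, dq (u : k) 0 (X ^ b) = (b : k) • X ^ (b - 1) := by
    intro b
    rw [dq_apply]
    congr 1
    simp
  have hterm : ∀ b : ℕ, 1 ≤ b → ∀ d : ℤ,
      (XZ ((b : ℤ) + d) : k[X]).coeff (b - 1) = if d = -1 then 1 else 0 := by
    intro b hb d
    by_cases h0 : 0 ≤ (b : ℤ) + d
    · rw [XZ, if_pos h0, coeff_X_pow]
      have hiff : (b - 1 = ((b : ℤ) + d).toNat) ↔ d = -1 := by omega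
      rw [if_congr hiff rfl rfl]
    · rw [XZ, if_neg h0, coeff_zero, if_neg (by omega)]
  have key : ∀ b : ℕ, 1 ≤ b → (b : k) =
      if (-1 : ℤ) ∈ Finset.Icc (-(N : ℤ)) (N : ℤ) then lev (u ^ b) (F (-1)) else 0 := by
    intro b hb
    have h := hFe b
    rw [hdq b] at h
    have h2 := congrArg (fun p : k[X] => p.coeff (b - 1)) h
    rw [Polynomial.coeff_smul, Polynomial.coeff_X_pow, if_pos rfl, smul_eq_mul, mul_one,
      Polynomial.finset_sum_coeff] at h2
    have h3 : ∀ d ∈ Finset.Icc (-(N : ℤ)) (N : ℤ),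
        (lev (u ^ b) (F d) • (XZ ((b : ℤ) + d) : k[X])).coeff (b - 1) =
        if d = (-1 : ℤ) then lev (u ^ b) (F (-1)) else 0 := by
      intro d _
      rw [Polynomial.coeff_smul, hterm b hb d, smul_eq_mul]
      by_cases hd : d = -1
      · subst hd; simp
      · simp [hd]
    rw [Finset.sum_congr rfl h3, Finset.sum_ite_eq' _ (-1 : ℤ)] at h2
    exact h2
  by_cases hmem : (-1 : ℤ) ∈ Finset.Icc (-(N : ℤ)) (N : ℤ)
  · have hGb : ∀ b : ℕ, 1 ≤ b → lev (u ^ b) (F (-1)) = (b : k) := by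
      intro b hb
      rw [key b hb, if_pos hmem]
    obtain ⟨n, p, hp⟩ := (F (-1)).exists_T_pow
    have hq0 : (u : k) ≠ 0 := u.ne_zero
    have hev : ∀ b : ℕ, 1 ≤ b → p.eval ((u : k) ^ b) = (b : k) * ((u : k) ^ b) ^ n := by
      intro b hb
      have h1 : lev (u ^ b) (Polynomial.toLaurent p) =
          lev (u ^ b) (F (-1)) * lev (u ^ b) (T (n : ℤ)) := by
        rw [hp, map_mul]
      rw [lev_toLaurent, hGb b hb, lev_T, zpow_natCast, Units.val_pow_eq_pow_val,
        Units.val_pow_eq_pow_val, Units.val_pow_eq_pow_val] at h1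
      exact h1
    have hzero : p.comp (Polynomial.C (u : k) * X) -
        Polynomial.C ((u : k) ^ n) * (p + X ^ n) = 0 := by
      apply Polynomial.eq_zero_of_infinite_isRoot
      apply Set.infinite_of_injective_forall_mem
        (f := fun b : ℕ => (u : k) ^ (b + 1))
        (fun a c h => by simpa using trans_pow_inj hq0 htr h)
      intro b
      simp only [Set.mem_setOf_eq, IsRoot.def, eval_sub, eval_comp, eval_mul, eval_C, eval_X,
        eval_add, eval_pow]
      have e1 : (u : k) * (u : k) ^ (b + 1) = (u : k) ^ (b + 2) := by ring
      rw [e1, hev (b + 2) (by omega), hev (b + 1) (by omega)]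
      push_cast
      ring
    have hco := congrArg (fun r : k[X] => r.coeff n) hzero
    simp only [Polynomial.coeff_sub, Polynomial.coeff_zero, coeff_comp_C_mul_X,
      Polynomial.coeff_C_mul, Polynomial.coeff_add, Polynomial.coeff_X_pow] at hco
    simp only [if_true] at hco
    have h9 : (u : k) ^ n = 0 := by linear_combination -hco
    exact pow_ne_zero n hq0 h9
  · have h1 := key 1 le_rfl
    rw [if_neg hmem] at h1
    norm_num at h1

end Aux

/-- the pair (∂, −λ_{y²}∘∂_y) does not lie in the subalgebra of
End_k(k[x]) × End_k(k[y]) generated by e, f, κ, κ'; hence η is not surjective. -/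
theorem stmt17 [CharZero k] (q : k) (hq : Transcendental ℚ q) :
    (dq q 0, -(lmul k (X ^ 2) * dq q 0)) ∉
      Algebra.adjoin k ({eElt q, fElt q, kElt q, kElt' q} :
        Set (Module.End k k[X] × Module.End k k[X])) := by
  intro hmem
  have hq0 : q ≠ 0 := by
    intro h
    exact hq (by rw [h]; exact isAlgebraic_zero)
  set u : kˣ := Units.mk0 q hq0 with hu
  have hval : (u : k) = q := rfl
  have htr : Transcendental ℚ (u : k) := by rwa [hval]
  have h2 : (u : k) ^ (2 : ℤ) ≠ 1 := by
    rw [show (2 : ℤ) = ((2 : ℕ) : ℤ) from rfl, zpow_natCast]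
    exact trans_pow_ne_one htr (by norm_num)
  have hm2 : (u : k) ^ (-2 : ℤ) ≠ 1 := by
    rw [show (-2 : ℤ) = -((2 : ℕ) : ℤ) from rfl, zpow_neg]
    intro h
    rw [inv_eq_one] at h
    exact h2 h
  have hgen : ({eElt q, fElt q, kElt q, kElt' q} :
      Set (Module.End k k[X] × Module.End k k[X])) ⊆
      ((Psub u).comap (AlgHom.fst k (Module.End k k[X]) (Module.End k k[X])) :
        Subalgebra k (Module.End k k[X] × Module.End k k[X])) := by
    have hdq2 : dq q 2 ∈ Psub u := rep_dq u 2 h2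
    have hdqm2 : dq q (-2) ∈ Psub u := rep_dq u (-2) hm2
    have hsig : ∀ a : ℤ, sigma q a ∈ Psub u := fun a => rep_sigma u a
    have hlm : lmul k (X ^ 2) ∈ Psub u := rep_lmulX2 u
    intro x hx
    simp only [Set.mem_insert_iff, Set.mem_singleton_iff] at hx
    rcases hx with rfl | rfl | rfl | rfl <;>
      rw [SetLike.mem_coe, Subalgebra.mem_comap] <;>
      simp only [AlgHom.fst_apply, eElt, fElt, kElt, kElt']
    · exact neg_mem (Subalgebra.smul_mem _ (mul_mem hlm hdq2) _)
    · exact Subalgebra.smul_mem _ (mul_mem (hsig (-2)) hdq2) _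
    · exact hsig 2
    · exact hsig (-2)
  have hfin := Algebra.adjoin_le hgen hmem
  rw [Subalgebra.mem_comap] at hfin
  exact not_rep_dq0 u htr hfin

end QDiff1
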